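/- arXiv:2301.09384 — 3 statements merged into one kernel-verified Lean document; each statement's English description precedes it below -/
import Mathlib

section
/- Let A and B be commutative Banach algebras with B Jacobson semisimple (i.e., the intersection of the kernels of all nonzero multiplicative linear functionals on B is {0}). Then every algebra homomorphism φ : A → B is continuous. -/
noncomputable section

/-- A multiplicative linear functional on a (non-unital, commutative) Banach algebra over `ℂ`
is automatically continuous. -/
lemma mult_functional_continuous
    {B : Type*}
    [NonUnitalNormedCommRing B] [NormedSpace ℂ B] [IsScalarTower ℂ B B]
    [SMulCommClass ℂ B B] [CompleteSpace B]
    (χ : B →ₗ[ℂ] ℂ) (hχ : ∀ u v : B, χ (u * v) = χ u * χ v) :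
    Continuous χ := by
  let χ' : B →ₙₐ[ℂ] ℂ :=
    { toFun := χ
      map_smul' := map_smul χ
      map_zero' := map_zero χ
      map_add' := map_add χ
      map_mul' := hχ }
  let ψ : WithLp 1 (Unitization ℂ B) →ₐ[ℂ] ℂ :=
    (Unitization.lift χ').comp (WithLp.unitizationAlgEquiv ℂ).toAlgHom
  have hψ : Continuous ψ := map_continuous ψ
  have hinr : Continuous (fun b : B => (WithLp.equiv 1 (Unitization ℂ B)).symm b) :=
    WithLp.unitization_isometry_inr.continuous
  have : ⇑χ = ⇑ψ ∘ (fun b : B => (WithLp.equiv 1 (Unitization ℂ B)).symm b) := by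
    ext b
    simp [ψ, χ', WithLp.equiv]
  rw [this]
  exact hψ.comp hinr

/-- Let `A` and `B` be commutative (not necessarily unital) Banach algebras over `ℂ`,
and suppose `B` is Jacobson semisimple in the sense that the only element annihilated by
every nonzero multiplicative linear functional on `B` is `0`.  Then every algebra
homomorphism (i.e. multiplicative linear map) `φ : A → B` is continuous. -/
theorem homomorphism_continuous_of_semisimple
    {A B : Type*}
    [NonUnitalNormedCommRing A] [NormedSpace ℂ A] [IsScalarTower ℂ A A]
    [SMulCommClass ℂ A A] [CompleteSpace A]
    [NonUnitalNormedCommRing B] [NormedSpace ℂ B] [IsScalarTower ℂ B B]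
    [SMulCommClass ℂ B B] [CompleteSpace B]
    (hsemi : ∀ y : B,
      (∀ χ : B →ₗ[ℂ] ℂ, (∀ u v : B, χ (u * v) = χ u * χ v) → χ ≠ 0 → χ y = 0) → y = 0)
    (φ : A →ₗ[ℂ] B) (hφ : ∀ x y : A, φ (x * y) = φ x * φ y) :
    Continuous φ := by
  apply φ.continuous_of_seq_closed_graph
  intro u x y hu hy
  have key : y - φ x = 0 := by
    apply hsemi
    intro χ hχ _
    -- χ ∘ φ is a multiplicative linear functional on A, hence continuous
    have hχφ : ∀ u v : A, (χ.comp φ) (u * v) = (χ.comp φ) u * (χ.comp φ) v := by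
      intro u v; simp [LinearMap.comp_apply, hφ, hχ]
    have hc1 : Continuous (χ.comp φ) := mult_functional_continuous _ hχφ
    have hc2 : Continuous χ := mult_functional_continuous _ hχ
    have h1 : Filter.Tendsto (fun n => χ (φ (u n))) Filter.atTop (nhds (χ (φ x))) :=
      (hc1.tendsto x).comp hu
    have h2 : Filter.Tendsto (fun n => χ (φ (u n))) Filter.atTop (nhds (χ y)) :=
      (hc2.tendsto y).comp hy
    have := tendsto_nhds_unique h1 h2
    simp [map_sub, ← this]
  have := sub_eq_zero.mp key
  exact this
end
end

section
/- Every nonzero multiplicative linear functional χ on the commutative Banach algebra L¹(ℝ^{2n}) ⊕ T¹ is of the form χ(f, A) = F_σ(f)(z) + (-1)^j F_W(A)(z) for some unique z ∈ ℝ^{2n} and j ∈ ℤ/2ℤ. -/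
open MeasureTheory Complex

noncomputable section

/-- `ℝⁿ`. -/
abbrev En (n : ℕ) := EuclideanSpace ℝ (Fin n)

/-- Phase space `ℝ^{2n}`. -/
abbrev Phase (n : ℕ) := En n × En n

/-- The standard symplectic form on `ℝ^{2n}`. -/
def symp {n : ℕ} (z w : Phase n) : ℝ := (inner ℝ z.2 w.1 : ℝ) - (inner ℝ z.1 w.2 : ℝ)

/-- `L¹(ℝ^{2n})`. -/
abbrev L1n (n : ℕ) := MeasureTheory.Lp (α := Phase n) ℂ 1 volume

/-- The symplectic Fourier transform `F_σ(f)(w) = (2π)^{-n} ∫ f(z) e^{-iσ(w,z)} dz`. -/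
def symplFT {n : ℕ} (f : L1n n) (w : Phase n) : ℂ :=
  ((2 * Real.pi) ^ n : ℝ)⁻¹ • ∫ z, f z * Complex.exp (-Complex.I * Complex.ofReal (symp w z))

variable {n : ℕ}
variable (T1 : Type*) [NormedAddCommGroup T1] [NormedSpace ℂ T1] [CompleteSpace T1]

/-- The product on `L¹(ℝ^{2n}) ⊕ T¹`:
`(f,A) ∗ (g,B) = (f∗g + A∗B, f∗B + g∗A)`, expressed in terms of the three
convolutions (function-function, operator-operator, function-operator). -/
def qmul (convL1 : L1n n →ₗ[ℂ] L1n n →ₗ[ℂ] L1n n)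
    (convTT : T1 →ₗ[ℂ] T1 →ₗ[ℂ] L1n n)
    (convFT : L1n n →ₗ[ℂ] T1 →ₗ[ℂ] T1)
    (a b : L1n n × T1) : L1n n × T1 :=
  (convL1 a.1 b.1 + convTT a.2 b.2, convFT a.1 b.2 + convFT b.1 a.2)

/-- Gelfand theory of `L¹(ℝ^{2n}) ⊕ T¹`: every nonzero multiplicative linear functional
`χ` on `L¹(ℝ^{2n}) ⊕ T¹` is of the form
`χ(f,A) = F_σ(f)(z) + (-1)^j F_W(A)(z)` for a unique `z ∈ ℝ^{2n}` and `j ∈ ℤ₂`.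
Here `T¹` is modelled as a Banach space carrying a (injective) Fourier–Weyl transform
`FW` compatible with the convolutions, the multiplicative functionals of `L¹(ℝ^{2n})`
being exactly the evaluations of the symplectic Fourier transform. -/
theorem characters_of_L1_oplus_T1
    (FW : T1 →ₗ[ℂ] (Phase n → ℂ)) (hFWinj : Function.Injective FW)
    (convL1 : L1n n →ₗ[ℂ] L1n n →ₗ[ℂ] L1n n)
    (convTT : T1 →ₗ[ℂ] T1 →ₗ[ℂ] L1n n)
    (convFT : L1n n →ₗ[ℂ] T1 →ₗ[ℂ] T1)
    -- the Gelfand theory of `L¹(ℝ^{2n})`: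
    (hL1char : ∀ χ₀ : L1n n →ₗ[ℂ] ℂ, (∀ f g, χ₀ (convL1 f g) = χ₀ f * χ₀ g) → χ₀ ≠ 0 →
      ∃ z : Phase n, ∀ f, χ₀ f = symplFT f z)
    -- compatibility of the Fourier transforms with the convolutions:
    (hTT : ∀ (S T : T1) (z : Phase n), symplFT (convTT S T) z = FW S z * FW T z)
    (hFT : ∀ (f : L1n n) (T : T1) (z : Phase n), FW (convFT f T) z = symplFT f z * FW T z)
    -- there exist operators with nonvanishing Fourier–Weyl transform:
    (hsep : ∀ z : Phase n, ∃ A : T1, FW A z ≠ 0)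
    -- `F_σ` separates the points of `ℝ^{2n}`:
    (hptsep : ∀ z w : Phase n, z ≠ w → ∃ f : L1n n, symplFT f z ≠ symplFT f w)
    (χ : (L1n n × T1) →ₗ[ℂ] ℂ)
    (hχmul : ∀ a b, χ (qmul T1 convL1 convTT convFT a b) = χ a * χ b)
    (hχne : χ ≠ 0) :
    ∃! p : Phase n × Fin 2, ∀ (f : L1n n) (A : T1),
      χ (f, A) = symplFT f p.1 + (-1 : ℂ) ^ (p.2 : ℕ) * FW A p.1 := by
  classical
  set χ₁ : L1n n →ₗ[ℂ] ℂ := χ.comp (LinearMap.inl ℂ (L1n n) T1) with hχ₁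
  have hχ₁app : ∀ f, χ₁ f = χ (f, 0) := fun f => rfl
  have hχsplit : ∀ (f : L1n n) (A : T1), χ (f, A) = χ (f, 0) + χ (0, A) := by
    intro f A
    rw [← map_add]
    simp
  have hmulFF : ∀ f g, χ₁ (convL1 f g) = χ₁ f * χ₁ g := by
    intro f g
    have := hχmul (f, 0) (g, 0)
    simpa [qmul, hχ₁app] using this
  have hmulTT : ∀ A B : T1, χ₁ (convTT A B) = χ (0, A) * χ (0, B) := by
    intro A B
    have := hχmul (0, A) (0, B)
    simpa [qmul, hχ₁app] using this
  have hχ₁ne : χ₁ ≠ 0 := by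
    intro h0
    apply hχne
    have h2 : ∀ A : T1, χ (0, A) = 0 := by
      intro A
      have h3 := hmulTT A A
      rw [h0] at h3
      simp only [LinearMap.zero_apply] at h3
      exact mul_self_eq_zero.mp h3.symm
    apply LinearMap.ext
    rintro ⟨f, A⟩
    rw [hχsplit f A, ← hχ₁app, h0, h2]
    simp
  obtain ⟨z, hz⟩ := hL1char χ₁ hmulFF hχ₁ne
  obtain ⟨A₀, hA₀⟩ := hsep z
  have hkey : ∀ A B : T1, χ (0, A) * χ (0, B) = FW A z * FW B z := by
    intro A B
    rw [← hmulTT, hχ₁app, ← hχ₁app, hz, hTT]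
  have hsq : χ (0, A₀) = FW A₀ z ∨ χ (0, A₀) = -FW A₀ z :=
    mul_self_eq_mul_self_iff.mp (hkey A₀ A₀)
  -- uniqueness helper
  have huniq : ∀ (jv : Fin 2),
      (∀ (f : L1n n) (A : T1),
        χ (f, A) = symplFT f z + (-1 : ℂ) ^ (jv : ℕ) * FW A z) →
      ∀ p : Phase n × Fin 2,
      (∀ (f : L1n n) (A : T1),
        χ (f, A) = symplFT f p.1 + (-1 : ℂ) ^ (p.2 : ℕ) * FW A p.1) → p = (z, jv) := by
    rintro jv hmain ⟨w, j⟩ hp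
    have hzeq : w = z := by
      by_contra hne
      obtain ⟨f, hf⟩ := hptsep w z hne
      apply hf
      have h1 := hp f 0
      have h2 := hmain f 0
      simp only [map_zero, Pi.zero_apply, mul_zero, add_zero] at h1 h2
      rw [← h1, h2]
    have h1 := hp 0 A₀
    have h2 := hmain 0 A₀
    simp only [hzeq] at h1
    rw [h2] at h1
    have h3 : (-1 : ℂ) ^ (jv : ℕ) * FW A₀ z = (-1 : ℂ) ^ (j : ℕ) * FW A₀ z :=
      add_left_cancel h1
    have h4 : (-1 : ℂ) ^ (jv : ℕ) = (-1 : ℂ) ^ (j : ℕ) := mul_right_cancel₀ hA₀ h3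
    have hj : j = jv := by
      fin_cases j <;> fin_cases jv <;> first | rfl | (exfalso; norm_num at h4)
    rw [Prod.mk.injEq]
    exact ⟨hzeq, hj⟩
  rcases hsq with hε | hε
  · refine ⟨(z, 0), ?_, ?_⟩
    · intro f A
      have hA : χ (0, A) = FW A z := by
        have h := hkey A A₀
        rw [hε] at h
        exact mul_right_cancel₀ hA₀ h
      rw [hχsplit f A, ← hχ₁app, hz, hA]
      norm_num
    · intro p hp
      refine huniq 0 ?_ p hp
      intro f A
      have hA : χ (0, A) = FW A z := by
        have h := hkey A A₀
        rw [hε] at h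
        exact mul_right_cancel₀ hA₀ h
      rw [hχsplit f A, ← hχ₁app, hz, hA]
      norm_num
  · have hmain : ∀ (f : L1n n) (A : T1),
        χ (f, A) = symplFT f z + (-1 : ℂ) ^ ((1 : Fin 2) : ℕ) * FW A z := by
      intro f A
      have hA : χ (0, A) = -FW A z := by
        have h := hkey A A₀
        rw [hε] at h
        have h' : χ (0, A) * FW A₀ z = (-FW A z) * FW A₀ z := by linear_combination -h
        exact mul_right_cancel₀ hA₀ h'
      rw [hχsplit f A, ← hχ₁app, hz, hA]
      have hc : ((1 : Fin 2) : ℕ) = 1 := rfl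
      rw [hc]
      ring
    exact ⟨(z, 1), hmain, fun p hp => huniq 1 hmain p hp⟩
end
end

section
/- Let S be a Segal algebra in L¹(ℝ^{2n}) and A ∈ T¹ a regular operator (F_W(A)(z) ≠ 0 for all z). Then S^A := {(f, g∗A) : f, g ∈ S}, with norm ‖(f, g∗A)‖ = ‖f‖_S + ‖A‖_{T¹}‖g‖_S, is a quantum Segal algebra; in particular ‖·‖ is well-defined (g∗A determines g), S^A is a Banach algebra under the QHA product, and is dense in L¹ ⊕ T¹. -/
open MeasureTheory Complex

noncomputable section

variable {n : ℕ}
variable (T1 : Type*) [NormedAddCommGroup T1] [NormedSpace ℂ T1] [CompleteSpace T1]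

lemma symplFT_integrable {n : ℕ} (f : L1n n) (w : Phase n) :
    Integrable (fun z => (f z) * Complex.exp (-Complex.I * Complex.ofReal (symp w z))) := by
  have hf := L1.integrable_coeFn f
  have hcont : Continuous fun z : Phase n => Complex.exp (-Complex.I * Complex.ofReal (symp w z)) := by
    apply Complex.continuous_exp.comp
    apply Continuous.mul continuous_const
    apply Complex.continuous_ofReal.comp
    unfold symp
    exact ((continuous_const.inner continuous_fst)).sub ((continuous_const.inner continuous_snd))
  refine (Integrable.mono' hf.norm (hf.aestronglyMeasurable.mul hcont.aestronglyMeasurable) ?_)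
  filter_upwards with z
  rw [norm_mul]
  have : ‖Complex.exp (-Complex.I * Complex.ofReal (symp w z))‖ = 1 := by
    rw [Complex.norm_exp]
    simp
  rw [this, mul_one]

lemma symplFT_sub' {n : ℕ} (f g : L1n n) (w : Phase n) :
    symplFT (f - g) w = symplFT f w - symplFT g w := by
  unfold symplFT
  rw [← smul_sub, ← integral_sub (symplFT_integrable f w) (symplFT_integrable g w)]
  congr 1
  refine integral_congr_ae ?_
  filter_upwards [Lp.coeFn_sub f g] with z hz
  rw [hz]
  simp [sub_mul]

set_option maxHeartbeats 1000000 in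
/-- Let `S` be a Segal algebra in `L¹(ℝ^{2n})` (modelled by an injective linear map
`ι₁ : S → L¹` with dense range and the usual Segal algebra properties) and let `A₀ ∈ T¹`
be a regular operator, `F_W(A₀)(z) ≠ 0` for all `z`.  Then
`S^{A₀} = {(f, g∗A₀) : f, g ∈ S}` with norm `‖f‖_S + ‖A₀‖ ‖g‖_S` is a quantum Segal
algebra: the norm is well defined (`g ∗ A₀` determines `g`), `S^{A₀}` is dense in
`L¹ ⊕ T¹`, closed under the quantum product with the Banach algebra norm estimate, and
shift-invariant with isometric shifts. -/
theorem induced_quantum_segal_algebra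
    (FW : T1 →ₗ[ℂ] (Phase n → ℂ))
    (convL1 : L1n n →ₗ[ℂ] L1n n →ₗ[ℂ] L1n n)
    (convTT : T1 →ₗ[ℂ] T1 →ₗ[ℂ] L1n n)
    (convFT : L1n n →ₗ[ℂ] T1 →ₗ[ℂ] T1)
    (shiftL : Phase n → (L1n n →ₗ[ℂ] L1n n))
    (shiftT : Phase n → (T1 →ₗ[ℂ] T1))
    -- compatibility and norm bounds for the convolutions:
    (hFT : ∀ (f : L1n n) (T : T1) (z : Phase n), FW (convFT f T) z = symplFT f z * FW T z)
    (hFσinj : ∀ f : L1n n, (∀ z : Phase n, symplFT f z = 0) → f = 0)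
    (hFTnorm : ∀ (f : L1n n) (T : T1), ‖convFT f T‖ ≤ ‖f‖ * ‖T‖)
    (hTTnorm : ∀ S T : T1, ‖convTT S T‖ ≤ ‖S‖ * ‖T‖)
    -- associativity relations of the convolutions:
    (hassoc1 : ∀ (u v : L1n n) (S T : T1),
      convTT (convFT u S) (convFT v T) = convL1 (convL1 u v) (convTT S T))
    (hassoc2 : ∀ (u v : L1n n) (T : T1), convFT u (convFT v T) = convFT (convL1 u v) T)
    (hshiftFT : ∀ (z : Phase n) (f : L1n n) (T : T1),
      shiftT z (convFT f T) = convFT (shiftL z f) T)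
    -- the Segal algebra `S`:
    (S : Type*) [NormedAddCommGroup S] [NormedSpace ℂ S] [CompleteSpace S]
    (ι₁ : S →ₗ[ℂ] L1n n) (hι₁inj : Function.Injective ι₁) (hSdense : DenseRange ι₁)
    (hSnorm : ∀ f : S, ‖ι₁ f‖ ≤ ‖f‖)
    (hSmul : ∀ f g : S, ∃ h : S, ι₁ h = convL1 (ι₁ f) (ι₁ g) ∧ ‖h‖ ≤ ‖f‖ * ‖g‖)
    (hSideal : ∀ (f : L1n n) (g : S), ∃ h : S, ι₁ h = convL1 f (ι₁ g) ∧ ‖h‖ ≤ ‖f‖ * ‖g‖)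
    (hSshift : ∀ (z : Phase n) (f : S), ∃ g : S, ι₁ g = shiftL z (ι₁ f) ∧ ‖g‖ = ‖f‖)
    -- the regular operator `A₀` and Werner's approximation theorem:
    (A₀ : T1) (hreg : ∀ z : Phase n, FW A₀ z ≠ 0)
    (hWerner : Dense {B : T1 | ∃ f : L1n n, B = convFT f A₀}) :
    -- the norm on `S^{A₀}` is well defined: `g ∗ A₀` determines `g`:
    (∀ g g' : S, convFT (ι₁ g) A₀ = convFT (ι₁ g') A₀ → g = g') ∧
    -- `S^{A₀}` is dense in `L¹ ⊕ T¹`: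
    Dense {p : L1n n × T1 | ∃ f g : S, p = (ι₁ f, convFT (ι₁ g) A₀)} ∧
    -- `S^{A₀}` is closed under the product, with the Banach algebra norm estimate:
    (∀ f g f' g' : S, ∃ f'' g'' : S,
      qmul T1 convL1 convTT convFT (ι₁ f, convFT (ι₁ g) A₀) (ι₁ f', convFT (ι₁ g') A₀)
        = (ι₁ f'', convFT (ι₁ g'') A₀) ∧
      ‖f''‖ + ‖A₀‖ * ‖g''‖ ≤ (‖f‖ + ‖A₀‖ * ‖g‖) * (‖f'‖ + ‖A₀‖ * ‖g'‖)) ∧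
    -- `S^{A₀}` is shift-invariant with isometric shifts:
    (∀ (z : Phase n) (f g : S), ∃ f' g' : S,
      (shiftL z (ι₁ f), shiftT z (convFT (ι₁ g) A₀)) = (ι₁ f', convFT (ι₁ g') A₀) ∧
      ‖f'‖ + ‖A₀‖ * ‖g'‖ = ‖f‖ + ‖A₀‖ * ‖g‖) := by
  classical
  -- `A₀` is nonzero
  have hA0 : A₀ ≠ 0 := by
    intro h
    apply hreg 0
    rw [h, map_zero]
    rfl
  have hA : (0:ℝ) < ‖A₀‖ := norm_pos_iff.mpr hA0
  -- injectivity of `convFT · A₀`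
  have key : ∀ u : L1n n, convFT u A₀ = 0 → u = 0 := by
    intro u hu
    apply hFσinj
    intro z
    have h := hFT u A₀ z
    rw [hu, map_zero] at h
    have h0 : (0:ℂ) = symplFT u z * FW A₀ z := h
    exact (mul_eq_zero.mp h0.symm).resolve_right (hreg z)
  have injL : ∀ u v : L1n n, convFT u A₀ = convFT v A₀ → u = v := by
    intro u v h
    have := key (u - v) (by rw [map_sub, LinearMap.sub_apply, h, sub_self])
    exact sub_eq_zero.mp this
  -- the symplectic FT turns `convL1` into products
  have hmul : ∀ (u v : L1n n) (z : Phase n),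
      symplFT (convL1 u v) z = symplFT u z * symplFT v z := by
    intro u v z
    have h1 := hFT (convL1 u v) A₀ z
    have h3 := hFT u (convFT v A₀) z
    have h4 := hFT v A₀ z
    rw [hassoc2 u v A₀, h1, h4] at h3
    refine mul_right_cancel₀ (hreg z) ?_
    rw [h3]; ring
  -- `convL1` is commutative
  have hcomm : ∀ u v : L1n n, convL1 u v = convL1 v u := by
    intro u v
    have h0 := hFσinj (convL1 u v - convL1 v u)
      (fun z => by rw [symplFT_sub', hmul, hmul]; ring)
    exact sub_eq_zero.mp h0
  refine ⟨?_, ?_, ?_, ?_⟩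
  · -- well-definedness
    intro g g' h
    exact hι₁inj (injL _ _ h)
  · -- density
    rw [Metric.dense_iff]
    intro p r hr
    obtain ⟨f, hf⟩ := Metric.denseRange_iff.mp hSdense p.1 r hr
    obtain ⟨B, hBmem, v, hv⟩ := Metric.dense_iff.mp hWerner p.2 (r/2) (by positivity)
    obtain ⟨g, hg⟩ := Metric.denseRange_iff.mp hSdense v (r/(2*‖A₀‖)) (by positivity)
    refine ⟨(ι₁ f, convFT (ι₁ g) A₀), ?_, f, g, rfl⟩
    rw [Metric.mem_ball, Prod.dist_eq, max_lt_iff]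
    constructor
    · rw [dist_comm]; exact hf
    · have h1 : dist (convFT (ι₁ g) A₀) B < r/2 := by
        rw [hv, dist_eq_norm]
        have e : convFT (ι₁ g) A₀ - convFT v A₀ = convFT (ι₁ g - v) A₀ := by
          rw [map_sub, LinearMap.sub_apply]
        rw [e]
        calc ‖convFT (ι₁ g - v) A₀‖ ≤ ‖ι₁ g - v‖ * ‖A₀‖ := hFTnorm _ _
          _ = dist v (ι₁ g) * ‖A₀‖ := by rw [dist_comm, dist_eq_norm]
          _ < (r/(2*‖A₀‖)) * ‖A₀‖ := by exact mul_lt_mul_of_pos_right hg hA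
          _ = r/2 := by field_simp
      calc dist (convFT (ι₁ g) A₀) p.2
          ≤ dist (convFT (ι₁ g) A₀) B + dist B p.2 := dist_triangle _ _ _
        _ < r/2 + r/2 := add_lt_add h1 (by simpa [dist_comm] using Metric.mem_ball.mp hBmem)
        _ = r := by ring
  · -- closure under the product
    intro f g f' g'
    obtain ⟨h₁, hh₁, hn₁⟩ := hSmul f f'
    obtain ⟨p, hp, hnp⟩ := hSmul g g'
    obtain ⟨q, hq, hnq⟩ := hSideal (convTT A₀ A₀) p
    obtain ⟨a, ha, hna⟩ := hSideal (ι₁ f) g'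
    obtain ⟨b, hb, hnb⟩ := hSideal (ι₁ f') g
    refine ⟨h₁ + q, a + b, ?_, ?_⟩
    · unfold qmul
      have e1 : convTT (convFT (ι₁ g) A₀) (convFT (ι₁ g') A₀) = ι₁ q := by
        rw [hassoc1, ← hp, hcomm, hq]
      have e2 : convFT (ι₁ f) (convFT (ι₁ g') A₀) = convFT (ι₁ a) A₀ := by
        rw [hassoc2, ha]
      have e3 : convFT (ι₁ f') (convFT (ι₁ g) A₀) = convFT (ι₁ b) A₀ := by
        rw [hassoc2, hb]
      simp only [e1, e2, e3, map_add, LinearMap.add_apply, hh₁]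
    · have hbq : ‖q‖ ≤ (‖A₀‖ * ‖A₀‖) * (‖g‖ * ‖g'‖) := by
        refine hnq.trans ?_
        exact mul_le_mul (hTTnorm A₀ A₀) hnp (norm_nonneg _) (by positivity)
      have hna' : ‖a‖ ≤ ‖f‖ * ‖g'‖ :=
        hna.trans (mul_le_mul_of_nonneg_right (hSnorm f) (norm_nonneg _))
      have hnb' : ‖b‖ ≤ ‖f'‖ * ‖g‖ :=
        hnb.trans (mul_le_mul_of_nonneg_right (hSnorm f') (norm_nonneg _))
      have t1 : ‖h₁ + q‖ ≤ ‖f‖ * ‖f'‖ + (‖A₀‖ * ‖A₀‖) * (‖g‖ * ‖g'‖) :=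
        (norm_add_le _ _).trans (add_le_add hn₁ hbq)
      have t2 : ‖a + b‖ ≤ ‖f‖ * ‖g'‖ + ‖f'‖ * ‖g‖ :=
        (norm_add_le _ _).trans (add_le_add hna' hnb')
      nlinarith [norm_nonneg A₀, norm_nonneg (a + b), mul_le_mul_of_nonneg_left t2 hA.le]
  · -- shift invariance
    intro z f g
    obtain ⟨f', hf', hnf'⟩ := hSshift z f
    obtain ⟨g', hg', hng'⟩ := hSshift z g
    exact ⟨f', g', by rw [hshiftFT, ← hf', ← hg'], by rw [hnf', hng']⟩
end
end
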